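/- Let k be a perfect field of characteristic p, A a commutative k-algebra, and à a flat W₂(k)-lift of A. The set of Frobenius lifts on à (endomorphisms φ of à lifting the p-th power map of A, compatible with the Frobenius of W₂(k)) is, when nonempty, a torsor under the group Der_k(A, F_*A) of k-derivations from A to F_*A: if φ is one Frobenius lift and ∂ ∈ Der_k(A, F_*A), then φ + p∂ (meaning x ↦ φ(x) + p·∂̃(x) for a set-theoretic lift) is again a Frobenius lift, and every Frobenius lift on à arises this way for a unique ∂. -/
import Mathlib


/-- `φ'` is a Frobenius lift on `Alift` (a `W₂(k)`-algebra with a surjection `π` onto `A`):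
it reduces to the `p`-th power map of `A` and is compatible with the Frobenius of `W₂(k)`
(which, `k` being perfect of characteristic `p`, raises each Witt coordinate to the `p`-th
power). -/
def IsFrobeniusLift (p : ℕ) [Fact p.Prime] (k : Type*) [Field k] [CharP k p]
    (A : Type*) [CommRing A]
    (Alift : Type*) [CommRing Alift] [Algebra (TruncatedWittVector p 2 k) Alift]
    (π : Alift →+* A) (φ' : Alift →+* Alift) : Prop :=
  (∀ x : Alift, π (φ' x) = (π x) ^ p) ∧
    ∀ c : TruncatedWittVector p 2 k,
      φ' (algebraMap (TruncatedWittVector p 2 k) Alift c) =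
        algebraMap (TruncatedWittVector p 2 k) Alift
          (TruncatedWittVector.mk p ![c.coeff 0 ^ p, c.coeff 1 ^ p])

/-- `D : A → A` is a `k`-linear Frobenius-twisted derivation, i.e. an element of
`Der_k(A, F_*A)`: additive, `D(xy) = x^p D(y) + y^p D(x)`, and vanishing on (the image
of) `k`. -/
def IsTwistedDerivation (p : ℕ) (k : Type*) [Field k] (A : Type*) [CommRing A]
    [Algebra k A] (D : A → A) : Prop :=
  (∀ x y : A, D (x + y) = D x + D y) ∧
    (∀ x y : A, D (x * y) = x ^ p * D y + y ^ p * D x) ∧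
    ∀ c : k, D (algebraMap k A c) = 0


section Witt
variable (p : ℕ) [Fact p.Prime] (k : Type*) [CommRing k]

lemma tw_one_coeff_zero : (1 : TruncatedWittVector p 2 k).coeff 0 = 1 := by
  have h : (1 : TruncatedWittVector p 2 k) = WittVector.truncate 2 1 := (map_one _).symm
  rw [h, WittVector.coeff_truncate]
  simpa using WittVector.one_coeff_zero p k

lemma wmul [CharP k p] (x : TruncatedWittVector p 2 k) :
    (p : TruncatedWittVector p 2 k) * x = TruncatedWittVector.mk p ![0, x.coeff 0 ^ p] := by
  obtain ⟨y, rfl⟩ := WittVector.truncate_surjective p 2 k x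
  have h : (p : TruncatedWittVector p 2 k) * WittVector.truncate 2 y
      = WittVector.truncate 2 (y * (p : WittVector p k)) := by
    rw [map_mul, map_natCast, mul_comm]
  rw [h]
  apply TruncatedWittVector.ext
  intro i
  fin_cases i
  · rw [TruncatedWittVector.coeff_mk, WittVector.coeff_truncate]
    simpa using WittVector.mul_charP_coeff_zero y
  · rw [TruncatedWittVector.coeff_mk, WittVector.coeff_truncate, WittVector.coeff_truncate]
    simpa using WittVector.mul_charP_coeff_succ y 0

lemma wp_eq [CharP k p] : (p : TruncatedWittVector p 2 k) = TruncatedWittVector.mk p ![0, 1] := by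
  have := wmul p k 1
  simpa [tw_one_coeff_zero] using this

lemma wpsq [CharP k p] : (p : TruncatedWittVector p 2 k) * (p : TruncatedWittVector p 2 k) = 0 := by
  rw [wmul, wp_eq]
  apply TruncatedWittVector.ext
  intro i
  fin_cases i <;>
    simp [TruncatedWittVector.coeff_mk, zero_pow (Fact.out : p.Prime).ne_zero]

lemma wdvd {k : Type*} [Field k] [CharP k p] [PerfectRing k p]
    (x : TruncatedWittVector p 2 k) (hx : x.coeff 0 = 0) :
    ∃ y, x = (p : TruncatedWittVector p 2 k) * y := by
  obtain ⟨z, hz⟩ := surjective_frobenius k p (x.coeff 1)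
  rw [frobenius_def] at hz
  refine ⟨TruncatedWittVector.mk p ![z, 0], ?_⟩
  rw [wmul]
  apply TruncatedWittVector.ext
  intro i
  fin_cases i <;> simp [TruncatedWittVector.coeff_mk, hx, hz]

lemma wcoeff0_sub (x y : TruncatedWittVector p 2 k) :
    (x - y).coeff 0 = x.coeff 0 - y.coeff 0 := by
  obtain ⟨x', rfl⟩ := WittVector.truncate_surjective p 2 k x
  obtain ⟨y', rfl⟩ := WittVector.truncate_surjective p 2 k y
  have h : (WittVector.truncate 2) x' - (WittVector.truncate 2) y'
      = (WittVector.truncate 2) (x' - y') := (map_sub _ _ _).symm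
  rw [h, WittVector.coeff_truncate, WittVector.coeff_truncate, WittVector.coeff_truncate]
  show (x' - y').coeff 0 = x'.coeff 0 - y'.coeff 0
  have g : ∀ w : WittVector p k, w.coeff 0 = WittVector.ghostComponent 0 w := by
    intro w
    rw [WittVector.ghostComponent_apply, wittPolynomial_zero]
    simp
  rw [g, g, g, map_sub]

lemma wdecomp {k : Type*} [Field k] [CharP k p] [PerfectRing k p]
    (c : TruncatedWittVector p 2 k) :
    ∃ y, c = TruncatedWittVector.mk p ![c.coeff 0, 0] + (p : TruncatedWittVector p 2 k) * y := by
  have h0 : (TruncatedWittVector.mk p ![c.coeff 0, 0]).coeff 0 = c.coeff 0 := by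
    simp [TruncatedWittVector.coeff_mk]
  obtain ⟨y, hy⟩ := wdvd p (c - TruncatedWittVector.mk p ![c.coeff 0, 0])
    (by rw [wcoeff0_sub, h0, sub_self])
  exact ⟨y, by rw [← hy]; ring⟩

end Witt

lemma flat_tor (p : ℕ) [Fact p.Prime] (k : Type*) [Field k] [CharP k p] [PerfectRing k p]
    (M : Type*) [CommRing M] [Algebra (TruncatedWittVector p 2 k) M]
    [Module.Flat (TruncatedWittVector p 2 k) M]
    (y : M) (h : (p : M) * y = 0) : ∃ e, y = (p : M) * e := by
  set R := TruncatedWittVector p 2 k with hRdef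
  have hsm : ∀ z : M, (p : R) • z = (p : M) * z := fun z => by
    rw [Algebra.smul_def, map_natCast]
  let l : R →ₗ[R] R := LinearMap.lsmul R R (p : R)
  have hla : ∀ z : R, l z = (p : R) * z := fun z => rfl
  have hex : Function.Exact l l := by
    intro z
    constructor
    · intro hz
      have hz' : (p : R) * z = 0 := by rw [← hla]; exact hz
      have h1 : TruncatedWittVector.mk p ![0, z.coeff 0 ^ p] = 0 := by
        rw [← wmul p k z]; exact hz'
      have h2 : z.coeff 0 ^ p = 0 := by
        have := congrArg (fun t => TruncatedWittVector.coeff 1 t) h1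
        simpa [TruncatedWittVector.coeff_mk] using this
      have hz0 : z.coeff 0 = 0 := pow_eq_zero_iff (Fact.out : p.Prime).ne_zero |>.mp h2
      obtain ⟨w, hw⟩ := wdvd p z hz0
      exact ⟨w, by rw [hla, ← hw]⟩
    · rintro ⟨w, rfl⟩
      rw [hla, hla, ← mul_assoc, wpsq p k, zero_mul]
  have htex := Module.Flat.lTensor_exact (R := R) M hex
  let r := TensorProduct.rid R M
  have key : ∀ t, r ((l.lTensor M) t) = (p : R) • r t := by
    intro t
    induction t using TensorProduct.induction_on with
    | zero => simp
    | tmul m s =>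
      rw [LinearMap.lTensor_tmul]
      show r (m ⊗ₜ[R] ((p : R) * s)) = (p : R) • r (m ⊗ₜ[R] s)
      rw [TensorProduct.rid_tmul, TensorProduct.rid_tmul, smul_smul]
    | add a b ha hb => rw [map_add, map_add, map_add, ha, hb, smul_add]
  have h0 : (l.lTensor M) (y ⊗ₜ[R] (1 : R)) = 0 := by
    apply r.injective
    rw [key, map_zero]
    have : r (y ⊗ₜ[R] (1 : R)) = y := by rw [TensorProduct.rid_tmul, one_smul]
    rw [this, hsm, h]
  obtain ⟨t, ht⟩ := (htex _).mp h0
  refine ⟨r t, ?_⟩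
  have hk := key t
  rw [ht] at hk
  have : r (y ⊗ₜ[R] (1 : R)) = y := by rw [TensorProduct.rid_tmul, one_smul]
  rw [this, hsm] at hk
  exact hk

/-- Let `k` be a perfect field of characteristic `p`, `A` a commutative `k`-algebra, and
`Alift` a flat `W₂(k)`-lift of `A`.  The set of Frobenius lifts on `Alift`, when nonempty, is a
torsor under `Der_k(A, F_*A)`: if `φ` is one Frobenius lift and `∂` is a twisted
derivation, then `φ + p∂` (i.e. `x ↦ φ(x) + p·d` for any lift `d` of `∂(π x)`) is again a
Frobenius lift, unique with this property; and every Frobenius lift on `Alift` arises this way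
from a unique `∂`. -/
theorem stmt18 (p : ℕ) [Fact p.Prime] (k : Type*) [Field k] [CharP k p] [PerfectRing k p]
    (A : Type*) [CommRing A] [Algebra k A]
    (Alift : Type*) [CommRing Alift] [Algebra (TruncatedWittVector p 2 k) Alift]
    [Module.Flat (TruncatedWittVector p 2 k) Alift]
    (π : Alift →+* A) (hsurj : Function.Surjective π)
    (hker : RingHom.ker π = Ideal.span {(p : Alift)})
    (hcomp : ∀ c : k,
      π (algebraMap (TruncatedWittVector p 2 k) Alift (TruncatedWittVector.mk p ![c, 0])) =
        algebraMap k A c)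
    (φ : Alift →+* Alift) (hφ : IsFrobeniusLift p k A Alift π φ) :
    (∀ D : A → A, IsTwistedDerivation p k A D →
      ∃! φ' : Alift →+* Alift, IsFrobeniusLift p k A Alift π φ' ∧
        ∀ x d : Alift, π d = D (π x) → φ' x = φ x + (p : Alift) * d) ∧
    (∀ φ' : Alift →+* Alift, IsFrobeniusLift p k A Alift π φ' →
      ∃! D : A → A, IsTwistedDerivation p k A D ∧
        ∀ x d : Alift, π d = D (π x) → φ' x = φ x + (p : Alift) * d) := by
  classical
  have hp2 : (p : Alift) * (p : Alift) = 0 := by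
    have h1 : (p : Alift) = algebraMap (TruncatedWittVector p 2 k) Alift
        (p : TruncatedWittVector p 2 k) := (map_natCast _ p).symm
    rw [h1, ← map_mul, wpsq p k, map_zero]
  have hπp : π (p : Alift) = 0 := by
    have h1 : (p : Alift) ∈ RingHom.ker π := by
      rw [hker]; exact Ideal.mem_span_singleton_self _
    exact h1
  have hker' : ∀ x : Alift, π x = 0 → ∃ e, x = (p : Alift) * e := by
    intro x hx
    have h1 : x ∈ RingHom.ker π := hx
    rw [hker, Ideal.mem_span_singleton] at h1
    obtain ⟨e, he⟩ := h1
    exact ⟨e, he⟩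
  have hEq : ∀ d d' : Alift, π d = π d' → (p : Alift) * d = (p : Alift) * d' := by
    intro d d' hdd
    obtain ⟨e, he⟩ := hker' (d - d') (by rw [map_sub, hdd, sub_self])
    have h2 : (p : Alift) * (d - d') = 0 := by
      rw [he, ← mul_assoc, hp2, zero_mul]
    rw [mul_sub, sub_eq_zero] at h2
    exact h2
  have hFlat : ∀ d d' : Alift, (p : Alift) * d = (p : Alift) * d' → π d = π d' := by
    intro d d' hdd
    have h0 : (p : Alift) * (d - d') = 0 := by rw [mul_sub, hdd, sub_self]
    obtain ⟨e, he⟩ := flat_tor p k Alift (d - d') h0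
    have h1 : π (d - d') = 0 := by rw [he, map_mul, hπp, zero_mul]
    rw [map_sub, sub_eq_zero] at h1
    exact h1
  have hred : ∀ c : TruncatedWittVector p 2 k,
      π (algebraMap (TruncatedWittVector p 2 k) Alift c) = algebraMap k A (c.coeff 0) := by
    intro c
    obtain ⟨y, hy⟩ := wdecomp p c
    have h1 : π (algebraMap (TruncatedWittVector p 2 k) Alift c)
        = π (algebraMap (TruncatedWittVector p 2 k) Alift
            (TruncatedWittVector.mk p ![c.coeff 0, 0]))
          + π (algebraMap (TruncatedWittVector p 2 k) Alift
            ((p : TruncatedWittVector p 2 k) * y)) := by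
      rw [← map_add, ← map_add, ← hy]
    have h2 : π (algebraMap (TruncatedWittVector p 2 k) Alift
        ((p : TruncatedWittVector p 2 k) * y)) = 0 := by
      rw [map_mul, map_natCast, map_mul, hπp, zero_mul]
    rw [h1, h2, add_zero, hcomp]
  have hdiffgen : ∀ (ψ : Alift →+* Alift), IsFrobeniusLift p k A Alift π ψ →
      ∀ x : Alift, ∃ e, ψ x - φ x = (p : Alift) * e := by
    intro ψ hψ x
    exact hker' _ (by rw [map_sub, hψ.1, hφ.1, sub_self])
  set s : A → Alift := Function.surjInv hsurj with hsdef
  have hs : ∀ a : A, π (s a) = a := fun a => Function.surjInv_eq hsurj a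
  constructor
  · -- Part 1
    intro D hD
    obtain ⟨hDadd, hDmul, hDalg⟩ := hD
    have hD0 : D 0 = 0 := by
      have := hDalg 0; rwa [map_zero] at this
    set δ : Alift → Alift := fun x => s (D (π x)) with hδdef
    have hδπ : ∀ x, π (δ x) = D (π x) := fun x => hs _
    have hkey : ∀ (x d : Alift), π d = D (π x) →
        (p : Alift) * δ x = (p : Alift) * d := by
      intro x d hd
      exact hEq _ _ (by rw [hδπ, hd])
    have hzkey : ∀ x : Alift, D (π x) = 0 → (p : Alift) * δ x = 0 := by
      intro x hx
      have := hkey x 0 (by rw [map_zero, hx])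
      rwa [mul_zero] at this
    refine ⟨{ toFun := fun x => φ x + (p : Alift) * δ x,
              map_one' := ?_, map_mul' := ?_, map_zero' := ?_, map_add' := ?_ },
            ⟨⟨?_, ?_⟩, ?_⟩, ?_⟩
    · show φ 1 + (p : Alift) * δ 1 = 1
      have h1 : (p : Alift) * δ 1 = 0 := hzkey 1 (by
        rw [map_one]
        have := hDalg 1; rwa [map_one] at this)
      rw [map_one, h1, add_zero]
    · intro x y
      have h1 : (p : Alift) * δ (x * y)
          = (p : Alift) * (φ x * δ y + φ y * δ x) := by
        apply hkey
        rw [map_add, map_mul, map_mul, map_mul, hφ.1, hφ.1, hδπ, hδπ, hDmul]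
      show φ (x * y) + (p : Alift) * δ (x * y)
          = (φ x + (p : Alift) * δ x) * (φ y + (p : Alift) * δ y)
      rw [map_mul, h1]
      linear_combination (-(δ x * δ y)) * hp2
    · show φ 0 + (p : Alift) * δ 0 = 0
      have h1 : (p : Alift) * δ 0 = 0 := hzkey 0 (by rw [map_zero, hD0])
      rw [map_zero, h1, add_zero]
    · intro x y
      have h1 : (p : Alift) * δ (x + y) = (p : Alift) * (δ x + δ y) := by
        apply hkey
        rw [map_add, map_add, hδπ, hδπ, hDadd]
      show φ (x + y) + (p : Alift) * δ (x + y)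
          = (φ x + (p : Alift) * δ x) + (φ y + (p : Alift) * δ y)
      rw [map_add, h1]
      ring
    · intro x
      show π (φ x + (p : Alift) * δ x) = π x ^ p
      rw [map_add, map_mul, hπp, zero_mul, add_zero, hφ.1]
    · intro c
      show φ (algebraMap (TruncatedWittVector p 2 k) Alift c)
          + (p : Alift) * δ (algebraMap (TruncatedWittVector p 2 k) Alift c) = _
      have h1 : (p : Alift) * δ (algebraMap (TruncatedWittVector p 2 k) Alift c) = 0 :=
        hzkey _ (by rw [hred, hDalg])
      rw [h1, add_zero]
      exact hφ.2 c
    · intro x d hd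
      show φ x + (p : Alift) * δ x = φ x + (p : Alift) * d
      rw [hkey x d hd]
    · intro ψ hψ
      apply RingHom.ext
      intro x
      have h1 : ψ x = φ x + (p : Alift) * δ x := hψ.2 x (δ x) (hδπ x)
      rw [h1]
      rfl
  · -- Part 2
    intro φ' hφ'
    have hdiff : ∀ x : Alift, ∃ e, φ' x - φ x = (p : Alift) * e := hdiffgen φ' hφ'
    choose E hE using hdiff
    have hK : ∀ (x e : Alift), φ' x - φ x = (p : Alift) * e →
        π e = π (E (s (π x))) := by
      intro x e he
      obtain ⟨w, hw⟩ := hker' (x - s (π x)) (by rw [map_sub, hs, sub_self])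
      have hx : x = s (π x) + (p : Alift) * w := by
        rw [← hw]; ring
      obtain ⟨u, hu⟩ := hker' (φ' w - φ w)
        (by rw [map_sub, hφ'.1, hφ.1, sub_self])
      have hpw : φ' ((p : Alift) * w) = (p : Alift) * φ' w := by
        rw [map_mul, map_natCast]
      have hpw' : φ ((p : Alift) * w) = (p : Alift) * φ w := by
        rw [map_mul, map_natCast]
      have hmain : φ' x - φ x = (p : Alift) * E (s (π x)) := by
        have h5 : φ' x - φ x
            = (φ' (s (π x)) - φ (s (π x))) + (p : Alift) * (φ' w - φ w) := by
          conv_lhs => rw [hx]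
          rw [map_add, map_add, hpw, hpw']; ring
        rw [h5, hE (s (π x)), hu, ← mul_assoc, hp2, zero_mul, add_zero]
      exact hFlat _ _ (by rw [← he, hmain])
    refine ⟨fun a => π (E (s a)), ⟨⟨?_, ?_, ?_⟩, ?_⟩, ?_⟩
    · -- additivity
      intro a b
      have hab : φ' (s a + s b) - φ (s a + s b) = (p : Alift) * (E (s a) + E (s b)) := by
        rw [map_add, map_add]
        linear_combination hE (s a) + hE (s b)
      have hπab : π (s a + s b) = a + b := by rw [map_add, hs, hs]
      have h2 := hK (s a + s b) _ hab
      rw [hπab, map_add] at h2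
      show π (E (s (a + b))) = π (E (s a)) + π (E (s b))
      rw [← h2]
    · -- multiplicativity
      intro a b
      have hπab : π (s a * s b) = a * b := by rw [map_mul, hs, hs]
      have ha' : φ' (s a) = φ (s a) + (p : Alift) * E (s a) := by
        linear_combination hE (s a)
      have hb' : φ' (s b) = φ (s b) + (p : Alift) * E (s b) := by
        linear_combination hE (s b)
      have hab : φ' (s a * s b) - φ (s a * s b)
          = (p : Alift) * (φ (s a) * E (s b) + φ (s b) * E (s a)) := by
        rw [map_mul, map_mul, ha', hb']
        linear_combination (E (s a) * E (s b)) * hp2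
      have h2 := hK (s a * s b) _ hab
      rw [hπab] at h2
      show π (E (s (a * b))) = a ^ p * π (E (s b)) + b ^ p * π (E (s a))
      rw [← h2, map_add, map_mul, map_mul, hφ.1, hφ.1, hs, hs]
    · -- vanishing on k
      intro c
      have hz : φ' (algebraMap (TruncatedWittVector p 2 k) Alift
            (TruncatedWittVector.mk p ![c, 0]))
          - φ (algebraMap (TruncatedWittVector p 2 k) Alift
            (TruncatedWittVector.mk p ![c, 0])) = (p : Alift) * 0 := by
        rw [hφ'.2, hφ.2, sub_self, mul_zero]
      have h2 := hK _ _ hz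
      rw [hcomp] at h2
      show π (E (s (algebraMap k A c))) = 0
      rw [← h2, map_zero]
    · -- the defining property
      intro x d hd
      have he := hE x
      have h2 := hK x (E x) he
      have h3 : (p : Alift) * E x = (p : Alift) * d := by
        apply hEq
        rw [h2]
        exact hd.symm
      linear_combination he + h3
    · -- uniqueness
      intro D' hD'
      obtain ⟨hD'der, hprop⟩ := hD'
      funext a
      have h1 : φ' (s a) = φ (s a) + (p : Alift) * s (D' a) :=
        hprop (s a) (s (D' a)) (by rw [hs, hs])
      have he := hE (s a)
      have h3 : (p : Alift) * s (D' a) = (p : Alift) * E (s a) := by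
        linear_combination he - h1
      have h4 := hFlat _ _ h3
      rw [hs] at h4
      exact h4
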